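/- Let k ≥ 1 and m ≥ 0 be integers, and work in the ring of polynomials in N variables x_1,…,x_N over ℚ with N ≥ k+m. Then e_k · h_m = ∑_{j=k}^{k+m} C(j,k) · p_{k+m}^{(j)}, where C(j,k) is the ordinary binomial coefficient. -/

import Mathlib

open MvPolynomial

/-- `p_n^{(r)}`: the sum of the monomial symmetric polynomials `m_λ` over the
partitions `λ` of `n` of length `r` (in `N` variables, over `ℚ`).
For `r = 0` this automatically gives `δ_{n,0}`. -/
noncomputable def pnr (N n r : ℕ) : MvPolynomial (Fin N) ℚ :=
  ∑ μ ∈ Finset.univ.filter (fun μ : Nat.Partition n => μ.parts.card = r),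
    msymm (Fin N) ℚ μ

lemma finset_val_le {σ : Type*} [DecidableEq σ] {t : Finset σ} {b : Multiset σ}
    (h : t ⊆ b.toFinset) : t.val ≤ b := by
  rw [Multiset.le_iff_count]
  intro a
  by_cases ha : a ∈ t
  · calc t.val.count a ≤ 1 := Multiset.nodup_iff_count_le_one.mp t.nodup a
      _ ≤ b.count a := by
          rw [Nat.one_le_iff_ne_zero, Ne, Multiset.count_eq_zero, not_not]
          exact Multiset.mem_toFinset.mp (h ha)
  · rw [Multiset.count_eq_zero.mpr (by simpa using ha)]
    exact Nat.zero_le _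

lemma partition_card_le {n : ℕ} (μ : Nat.Partition n) : μ.parts.card ≤ n := by
  have := Multiset.card_nsmul_le_sum (s := μ.parts) (a := 1)
    (fun x hx => μ.parts_pos hx)
  simpa [μ.parts_sum] using this

lemma ofSym_parts_card {n N : ℕ} (s : Sym (Fin N) n) :
    (Nat.Partition.ofSym s).parts.card = s.val.toFinset.card := by
  simp [Nat.Partition.ofSym, Multiset.toFinset, Multiset.card_map]

open Finset in
lemma fiber_card (k m N : ℕ) (s : Sym (Fin N) (k + m)) :
    ((powersetCard k (univ : Finset (Fin N)) ×ˢ (univ : Finset (Sym (Fin N) m))).filter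
      (fun p => (p.1.val + p.2.val : Multiset (Fin N)) = s.val)).card
      = s.val.toFinset.card.choose k := by
  rw [← Finset.card_powersetCard]
  apply Finset.card_bij' (fun p _ => p.1)
    (fun t ht => (t, ⟨s.val - t.val, by
      have h1 : Multiset.card t.val = k := (Finset.mem_powersetCard.mp ht).2
      have h2 : Multiset.card s.val = k + m := s.2
      have h3 := Multiset.card_sub (finset_val_le (Finset.mem_powersetCard.mp ht).1)
      omega⟩))
  case hi =>
    intro p hp
    rw [Finset.mem_filter, Finset.mem_product, Finset.mem_powersetCard] at hp
    rw [Finset.mem_powersetCard]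
    refine ⟨fun a ha => ?_, hp.1.1.2⟩
    rw [Multiset.mem_toFinset, ← hp.2]
    exact Multiset.mem_add.mpr (Or.inl ha)
  case hj =>
    intro t ht
    rw [Finset.mem_filter, Finset.mem_product]
    have hle := finset_val_le (Finset.mem_powersetCard.mp ht).1
    refine ⟨⟨Finset.mem_powersetCard.mpr ⟨Finset.subset_univ _, (Finset.mem_powersetCard.mp ht).2⟩,
      Finset.mem_univ _⟩, ?_⟩
    show t.val + (s.val - t.val) = s.val
    rw [add_comm]
    exact tsub_add_cancel_of_le hle
  case left_inv =>
    rintro ⟨t, u⟩ hp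
    rw [Finset.mem_filter] at hp
    simp only [Prod.mk.injEq, true_and]
    refine Prod.ext rfl (Subtype.ext ?_)
    show s.val - t.val = u.val
    have h2 : t.val + u.val = s.val := hp.2
    rw [← h2]
    exact add_tsub_cancel_left _ _
  case right_inv =>
    intro t ht
    rfl

open Finset in
lemma lhs_eq (k m N : ℕ) :
    esymm (Fin N) ℚ k * hsymm (Fin N) ℚ m =
      ∑ s : Sym (Fin N) (k + m),
        (((powersetCard k (univ : Finset (Fin N))) ×ˢ (univ : Finset (Sym (Fin N) m))).filter
          (fun p => (p.1.val + p.2.val : Multiset (Fin N)) = s.val)).card •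
          (s.val.map (X : Fin N → MvPolynomial (Fin N) ℚ)).prod := by
  have step1 : esymm (Fin N) ℚ k * hsymm (Fin N) ℚ m
      = ∑ p ∈ (powersetCard k (univ : Finset (Fin N)) ×ˢ (univ : Finset (Sym (Fin N) m))),
          (((p.1.val + p.2.val : Multiset (Fin N)).map X).prod) := by
    rw [esymm, hsymm, Finset.sum_mul_sum, Finset.sum_product]
    refine Finset.sum_congr rfl fun t ht => Finset.sum_congr rfl fun u hu => ?_
    rw [Multiset.map_add, Multiset.prod_add]
    congr 1
  have hmap : ∀ p ∈ (powersetCard k (univ : Finset (Fin N)) ×ˢ (univ : Finset (Sym (Fin N) m))),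
      (p.1.val + p.2.val : Multiset (Fin N)) ∈
        (univ : Finset (Sym (Fin N) (k + m))).image (fun s => s.val) := by
    intro p hp
    rw [Finset.mem_product, Finset.mem_powersetCard] at hp
    refine Finset.mem_image.mpr ⟨⟨p.1.val + p.2.val, ?_⟩, Finset.mem_univ _, rfl⟩
    rw [Multiset.card_add, p.2.2]
    have : Multiset.card p.1.val = k := hp.1.2
    omega
  have himg := Finset.sum_image (g := fun s : Sym (Fin N) (k + m) => s.val)
    (s := (univ : Finset (Sym (Fin N) (k + m))))
    (f := fun b => ((powersetCard k (univ : Finset (Fin N)) ×ˢ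
        (univ : Finset (Sym (Fin N) m))).filter
        (fun p => (p.1.val + p.2.val : Multiset (Fin N)) = b)).card •
        (b.map (X : Fin N → MvPolynomial (Fin N) ℚ)).prod)
    (fun x _ y _ h => Subtype.val_injective h)
  rw [step1, ← Finset.sum_fiberwise_of_maps_to' hmap (fun b => (b.map X).prod), ← himg]
  exact Finset.sum_congr rfl fun j _ => Finset.sum_const _

open Finset in
lemma rhs_eq (k m N : ℕ) :
    ∑ j ∈ Icc k (k + m), (j.choose k : MvPolynomial (Fin N) ℚ) * pnr N (k + m) j
      = ∑ s : Sym (Fin N) (k + m),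
          (s.val.toFinset.card.choose k : MvPolynomial (Fin N) ℚ) *
            (s.val.map (X : Fin N → MvPolynomial (Fin N) ℚ)).prod := by
  have h1 : Icc k (k + m) ⊆ range (k + m + 1) := by
    intro j hj
    rw [mem_Icc] at hj
    rw [mem_range]
    omega
  have h2 : ∀ j ∈ range (k + m + 1), j ∉ Icc k (k + m) →
      (j.choose k : MvPolynomial (Fin N) ℚ) * pnr N (k + m) j = 0 := by
    intro j hj hjn
    rw [mem_range] at hj
    rw [mem_Icc] at hjn
    have : j < k := by omega
    rw [Nat.choose_eq_zero_of_lt this]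
    simp
  rw [Finset.sum_subset h1 h2]
  calc ∑ j ∈ range (k + m + 1), (j.choose k : MvPolynomial (Fin N) ℚ) * pnr N (k + m) j
      = ∑ j ∈ range (k + m + 1),
          ∑ μ ∈ univ.filter (fun μ : Nat.Partition (k + m) => μ.parts.card = j),
            ((μ.parts.card.choose k : MvPolynomial (Fin N) ℚ) * msymm (Fin N) ℚ μ) := by
        refine sum_congr rfl fun j hj => ?_
        rw [pnr, Finset.mul_sum]
        exact sum_congr rfl fun μ hμ => by rw [(mem_filter.mp hμ).2]
    _ = ∑ μ : Nat.Partition (k + m),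
          ((μ.parts.card.choose k : MvPolynomial (Fin N) ℚ) * msymm (Fin N) ℚ μ) :=
        Finset.sum_fiberwise_of_maps_to
          (fun μ _ => mem_range.mpr (Nat.lt_succ_of_le (partition_card_le μ))) _
    _ = ∑ μ : Nat.Partition (k + m),
          ∑ s ∈ univ.filter (fun s : Sym (Fin N) (k + m) => Nat.Partition.ofSym s = μ),
            (((Nat.Partition.ofSym s).parts.card.choose k : MvPolynomial (Fin N) ℚ) *
              (s.val.map X).prod) := by
        refine sum_congr rfl fun μ _ => ?_
        have hst := Finset.sum_subtype
          (p := fun s : Sym (Fin N) (k + m) => Nat.Partition.ofSym s = μ)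
          (F := inferInstance)
          (univ.filter (fun s : Sym (Fin N) (k + m) => Nat.Partition.ofSym s = μ))
          (fun x => by simp) (fun s : Sym (Fin N) (k + m) => (s.val.map (X (R := ℚ))).prod)
        rw [msymm, ← hst, Finset.mul_sum]
        refine sum_congr rfl fun s hs => ?_
        rw [(mem_filter.mp hs).2]
    _ = ∑ s : Sym (Fin N) (k + m),
          (((Nat.Partition.ofSym s).parts.card.choose k : MvPolynomial (Fin N) ℚ) *
            (s.val.map X).prod) := Finset.sum_fiberwise _ _ _
    _ = _ := by
        refine sum_congr rfl fun s _ => ?_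
        rw [ofSym_parts_card]

/-- for `k ≥ 1`, `m ≥ 0` and `N ≥ k + m` variables,
`e_k · h_m = ∑_{j=k}^{k+m} C(j,k) · p_{k+m}^{(j)}`. -/
theorem esymm_mul_hsymm_eq_sum_pnr (k m N : ℕ) (hk : 1 ≤ k) (hN : k + m ≤ N) :
    esymm (Fin N) ℚ k * hsymm (Fin N) ℚ m =
      ∑ j ∈ Finset.Icc k (k + m),
        (j.choose k : MvPolynomial (Fin N) ℚ) * pnr N (k + m) j := by
  rw [lhs_eq, rhs_eq]
  refine Finset.sum_congr rfl fun s _ => ?_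
  rw [fiber_card, nsmul_eq_mul]
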